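/- Non-uniform partial Immerman–Szelepcsényi: for Boolean functions B_0,...,B_{N−1} computed by nondeterministic branching programs of total size s, and for each i < N and k, there is a nondeterministic branching program of size polynomial in s and N which, on every assignment making exactly k of B_0,...,B_{N−1} true, computes the negation ¬B_i. In particular the program is a positive (monotone) combination of the programs B_0,...,B_{N−1}. -/

import Mathlib

/-- A nondeterministic branching program: a rooted DAG (nodes `0, …, size-1`, presented in
topological order, root `0`) with a distinguished accepting sink `sink1`; each node `v`
is labelled by a propositional variable `label v` and has, for each Boolean `b`, a list of
successors `succ v b` (all strictly larger than `v`, ensuring acyclicity). -/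
structure NBP where
  size : ℕ
  label : ℕ → ℕ
  succ : ℕ → Bool → List ℕ
  sink1 : ℕ
  sink1_lt : sink1 < size
  succ_lt : ∀ v b w, w ∈ succ v b → v < w ∧ w < size

/-- `P.acc α v`: there is a run from node `v` to the accepting sink consistent with `α`. -/
def NBP.acc (P : NBP) (α : ℕ → Bool) (v : ℕ) : Prop :=
  v = P.sink1 ∨ ∃ w, ∃ _h : w ∈ P.succ v (α (P.label v)), P.acc α w
termination_by P.size - v
decreasing_by
  have := P.succ_lt v _ w _h
  omega

/-- `P` accepts `α`: some run from the root reaches the accepting sink. -/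
def NBP.accepts (P : NBP) (α : ℕ → Bool) : Prop := P.acc α 0

namespace IS
def idx (K S j c t : ℕ) : ℕ := (j * (K+1) + c) * (S+1) + t
def dj (K S v : ℕ) : ℕ := v / ((K+1)*(S+1))
def dc (K S v : ℕ) : ℕ := v % ((K+1)*(S+1)) / (S+1)
def dt (S v : ℕ) : ℕ := v % (S+1)

lemma dc_le (K S v : ℕ) : dc K S v ≤ K := by
  have h : v % ((K+1)*(S+1)) < (K+1)*(S+1) := Nat.mod_lt _ (by positivity)
  have := Nat.div_lt_iff_lt_mul (show 0 < S+1 by omega) |>.2 (by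
    calc v % ((K+1)*(S+1)) < (K+1)*(S+1) := h
    _ = (K+1)*(S+1) := rfl)
  unfold dc
  omega

lemma dt_le (S v : ℕ) : dt S v ≤ S := by
  have := Nat.mod_lt v (show 0 < S+1 by omega)
  unfold dt; omega

lemma idx_decode (K S v : ℕ) : idx K S (dj K S v) (dc K S v) (dt S v) = v := by
  have h1 := Nat.div_add_mod v ((K+1)*(S+1))
  have h2 := Nat.div_add_mod (v % ((K+1)*(S+1))) (S+1)
  have h3 : v % ((K+1)*(S+1)) % (S+1) = v % (S+1) :=
    Nat.mod_mod_of_dvd v ⟨K+1, by ring⟩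
  unfold idx dj dc dt
  rw [← h3]
  nlinarith [h1, h2]

lemma decode_idx (K S j c t : ℕ) (hc : c ≤ K) (ht : t ≤ S) :
    dj K S (idx K S j c t) = j ∧ dc K S (idx K S j c t) = c ∧ dt S (idx K S j c t) = t := by
  have e1 : idx K S j c t = ((K+1)*(S+1)) * j + (c * (S+1) + t) := by unfold idx; ring
  have hr : c * (S+1) + t < (K+1)*(S+1) := by nlinarith
  have hdj : dj K S (idx K S j c t) = j := by
    unfold dj; rw [e1, Nat.mul_add_div (by positivity), Nat.div_eq_of_lt hr, Nat.add_zero]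
  have hmod : idx K S j c t % ((K+1)*(S+1)) = c * (S+1) + t := by
    rw [e1, Nat.mul_add_mod, Nat.mod_eq_of_lt hr]
  have hdc : dc K S (idx K S j c t) = c := by
    unfold dc; rw [hmod]
    rw [Nat.add_comm, Nat.add_mul_div_right _ _ (show 0 < S+1 by omega), Nat.div_eq_of_lt (by omega)]; omega
  have hdt : dt S (idx K S j c t) = t := by
    unfold dt
    have : idx K S j c t % (S+1) = (idx K S j c t % ((K+1)*(S+1))) % (S+1) :=
      (Nat.mod_mod_of_dvd _ ⟨K+1, by ring⟩).symm
    rw [this, hmod, Nat.mul_add_mod', Nat.mod_eq_of_lt (by omega)]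
  exact ⟨hdj, hdc, hdt⟩

lemma idx_lt_idx {K S j c t j' c' t' : ℕ} (hc : c ≤ K) (ht : t ≤ S)
    (h : j < j' ∨ (j = j' ∧ c < c') ∨ (j = j' ∧ c = c' ∧ t < t')) :
    idx K S j c t < idx K S j' c' t' := by
  unfold idx
  have key : ∀ a a' u u' : ℕ, a < a' → u ≤ S → a*(S+1)+u < a'*(S+1)+u' := by
    intro a a' u u' ha hu
    have h1 : (a+1)*(S+1) ≤ a'*(S+1) := Nat.mul_le_mul_right _ ha
    have h2 : (a+1)*(S+1) = a*(S+1)+(S+1) := by ring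
    omega
  rcases h with h | ⟨rfl, h⟩ | ⟨rfl, rfl, h⟩
  · apply key _ _ _ _ _ ht
    have h1 : (j+1)*(K+1) ≤ j'*(K+1) := Nat.mul_le_mul_right _ h
    have h2 : (j+1)*(K+1) = j*(K+1)+(K+1) := by ring
    omega
  · exact key _ _ _ _ (by omega) ht
  · omega

lemma idx_le_idx {K S j c t j' c' t' : ℕ} (hc : c ≤ K) (ht : t ≤ S)
    (h : j < j' ∨ (j = j' ∧ c < c') ∨ (j = j' ∧ c = c' ∧ t ≤ t')) :
    idx K S j c t ≤ idx K S j' c' t' := by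
  rcases h with h | h | ⟨rfl, rfl, h⟩
  · exact (idx_lt_idx hc ht (Or.inl h)).le
  · exact (idx_lt_idx hc ht (Or.inr (Or.inl h))).le
  · unfold idx; omega

lemma idx_inj {K S j c t j' c' t' : ℕ} (hc : c ≤ K) (ht : t ≤ S) (hc' : c' ≤ K) (ht' : t' ≤ S)
    (h : idx K S j c t = idx K S j' c' t') : j = j' ∧ c = c' ∧ t = t' := by
  have h1 := decode_idx K S j c t hc ht
  have h2 := decode_idx K S j' c' t' hc' ht'
  rw [h] at h1
  omega


lemma acc_iff (P : NBP) (α : ℕ → Bool) (v : ℕ) :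
    P.acc α v ↔ (v = P.sink1 ∨ ∃ w, ∃ _h : w ∈ P.succ v (α (P.label v)), P.acc α w) := by
  rw [NBP.acc]

variable (N : ℕ) (Bs : Fin N → NBP) (iv K : ℕ)

def SB : ℕ := 1 + ∑ j, (Bs j).size

lemma size_le_SB (j : Fin N) : (Bs j).size + 1 ≤ SB N Bs := by
  unfold SB
  have := Finset.single_le_sum (f := fun j => (Bs j).size) (fun _ _ => Nat.zero_le _)
    (Finset.mem_univ j)
  omega

lemma one_le_SB : 1 ≤ SB N Bs := by unfold SB; omega

def qlabelAux (j t : ℕ) : ℕ :=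
  if h : j < N ∧ 1 ≤ t then (Bs ⟨j, h.1⟩).label (t-1) else 0

def qsuccAux (j c t : ℕ) (b : Bool) : List ℕ :=
  if hj : j < N then
    if t = 0 then
      idx K (SB N Bs) (j+1) c 0 :: (if j ≠ iv ∧ c < K then [idx K (SB N Bs) j c 1] else [])
    else
      ((Bs ⟨j, hj⟩).succ (t-1) b).map (fun w => idx K (SB N Bs) j c (1+w)) ++
        (if t - 1 = (Bs ⟨j, hj⟩).sink1 ∧ c < K then [idx K (SB N Bs) (j+1) (c+1) 0] else [])
  else []

def q : NBP where
  size := idx K (SB N Bs) N K 0 + 1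
  label v := qlabelAux N Bs (dj K (SB N Bs) v) (dt (SB N Bs) v)
  succ v b := qsuccAux N Bs iv K (dj K (SB N Bs) v) (dc K (SB N Bs) v) (dt (SB N Bs) v) b
  sink1 := idx K (SB N Bs) N K 0
  sink1_lt := Nat.lt_succ_self _
  succ_lt := by
    intro v b w hw
    unfold qsuccAux at hw
    beta_reduce at hw
    set S' := SB N Bs with hS'
    set j := dj K S' v with hj'
    set c := dc K S' v with hc'
    set t := dt S' v with ht'
    have hvc : c ≤ K := dc_le K S' v
    have hvt : t ≤ S' := dt_le S' v
    have hv : idx K S' j c t = v := idx_decode K S' v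
    have hS1 : 1 ≤ S' := one_le_SB N Bs
    split at hw
    case isFalse => simp at hw
    case isTrue hj =>
      split at hw
      case isTrue ht0 =>
        simp only [List.mem_cons] at hw
        rcases hw with rfl | hw
        · constructor
          · rw [← hv]; exact idx_lt_idx hvc hvt (by omega)
          · have : idx K S' (j+1) c 0 ≤ idx K S' N K 0 :=
              idx_le_idx hvc (Nat.zero_le _) (by omega)
            omega
        · rcases Decidable.em (j ≠ iv ∧ c < K) with h | h
          · rw [if_pos h] at hw
            simp only [List.mem_singleton] at hw
            subst hw
            constructor
            · rw [← hv]; exact idx_lt_idx hvc hvt (by omega)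
            · have : idx K S' j c 1 ≤ idx K S' N K 0 := idx_le_idx hvc hS1 (by omega)
              omega
          · rw [if_neg h] at hw; simp at hw
      case isFalse ht0 =>
        simp only [List.mem_append, List.mem_map] at hw
        rcases hw with ⟨w', hw', rfl⟩ | hw
        · have hb := (Bs ⟨j, hj⟩).succ_lt _ _ _ hw'
          have hss := size_le_SB N Bs ⟨j, hj⟩
          constructor
          · rw [← hv]; exact idx_lt_idx hvc hvt (by omega)
          · have : idx K S' j c (1+w') ≤ idx K S' N K 0 :=
              idx_le_idx hvc (by omega) (by omega)
            omega
        · rcases Decidable.em (t - 1 = (Bs ⟨j, hj⟩).sink1 ∧ c < K) with h | h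
          · rw [if_pos h] at hw
            simp only [List.mem_singleton] at hw
            subst hw
            constructor
            · rw [← hv]; exact idx_lt_idx hvc hvt (by omega)
            · have : idx K S' (j+1) (c+1) 0 ≤ idx K S' N K 0 :=
                idx_le_idx (by omega) (Nat.zero_le _) (by omega)
              omega
          · rw [if_neg h] at hw; simp at hw

lemma q_sink : (q N Bs iv K).sink1 = idx K (SB N Bs) N K 0 := rfl

lemma q_succ_idx (j c t : ℕ) (hc : c ≤ K) (ht : t ≤ SB N Bs) (b : Bool) :
    (q N Bs iv K).succ (idx K (SB N Bs) j c t) b = qsuccAux N Bs iv K j c t b := by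
  have h := decode_idx K (SB N Bs) j c t hc ht
  show qsuccAux N Bs iv K (dj K (SB N Bs) _) (dc K (SB N Bs) _) (dt (SB N Bs) _) b = _
  rw [h.1, h.2.1, h.2.2]

lemma q_label_idx (j c t : ℕ) (hc : c ≤ K) (ht : t ≤ SB N Bs) :
    (q N Bs iv K).label (idx K (SB N Bs) j c t) = qlabelAux N Bs j t := by
  have h := decode_idx K (SB N Bs) j c t hc ht
  show qlabelAux N Bs (dj K (SB N Bs) _) (dt (SB N Bs) _) = _
  rw [h.1, h.2.2]

lemma qlabelAux_copy {j : ℕ} (hj : j < N) (u : ℕ) :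
    qlabelAux N Bs j (1+u) = (Bs ⟨j,hj⟩).label u := by
  unfold qlabelAux
  rw [dif_pos ⟨hj, by omega⟩]
  norm_num

lemma qsuccAux_copy {j : ℕ} (hj : j < N) (c u : ℕ) (b : Bool) :
    qsuccAux N Bs iv K j c (1+u) b =
      ((Bs ⟨j,hj⟩).succ u b).map (fun w => idx K (SB N Bs) j c (1+w)) ++
      (if u = (Bs ⟨j,hj⟩).sink1 ∧ c < K then [idx K (SB N Bs) (j+1) (c+1) 0] else []) := by
  unfold qsuccAux
  rw [dif_pos hj, if_neg (by omega)]
  norm_num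

lemma qsuccAux_dec {j : ℕ} (hj : j < N) (c : ℕ) (b : Bool) :
    qsuccAux N Bs iv K j c 0 b =
      idx K (SB N Bs) (j+1) c 0 ::
        (if j ≠ iv ∧ c < K then [idx K (SB N Bs) j c 1] else []) := by
  unfold qsuccAux
  rw [dif_pos hj, if_pos rfl]

lemma acc_copy (α : ℕ → Bool) {j : ℕ} (c u : ℕ) (hj : j < N) (hc : c < K)
    (hu : u < (Bs ⟨j,hj⟩).size) :
    (q N Bs iv K).acc α (idx K (SB N Bs) j c (1+u)) ↔
      ((Bs ⟨j,hj⟩).acc α u ∧ (q N Bs iv K).acc α (idx K (SB N Bs) (j+1) (c+1) 0)) := by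
  have hss := size_le_SB N Bs ⟨j,hj⟩
  suffices H : ∀ n u, (Bs ⟨j,hj⟩).size - u ≤ n → u < (Bs ⟨j,hj⟩).size →
      ((q N Bs iv K).acc α (idx K (SB N Bs) j c (1+u)) ↔
        ((Bs ⟨j,hj⟩).acc α u ∧ (q N Bs iv K).acc α (idx K (SB N Bs) (j+1) (c+1) 0))) from
    H _ u (le_refl _) hu
  intro n
  induction n with
  | zero => intro u h1 h2; omega
  | succ n ih =>
    intro u h1 h2
    have ht1 : 1 + u ≤ SB N Bs := by omega
    have hne : idx K (SB N Bs) j c (1+u) ≠ (q N Bs iv K).sink1 := by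
      rw [q_sink]
      intro h
      have := idx_inj (le_of_lt hc) ht1 (le_refl K) (Nat.zero_le _) h
      omega
    rw [acc_iff (q N Bs iv K) α (idx K (SB N Bs) j c (1+u)),
      q_label_idx N Bs iv K j c (1+u) (le_of_lt hc) ht1, qlabelAux_copy N Bs hj,
      q_succ_idx N Bs iv K j c (1+u) (le_of_lt hc) ht1, qsuccAux_copy N Bs iv K hj,
      acc_iff (Bs ⟨j,hj⟩) α u]
    constructor
    · rintro (h | ⟨w, hw, haccw⟩)
      · exact absurd h hne
      · rcases List.mem_append.1 hw with hw | hw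
        · rcases List.mem_map.1 hw with ⟨w', hw', rfl⟩
          have hb := (Bs ⟨j,hj⟩).succ_lt _ _ _ hw'
          have hih := (ih w' (by omega) (by omega)).1 haccw
          exact ⟨Or.inr ⟨w', hw', hih.1⟩, hih.2⟩
        · rcases Decidable.em (u = (Bs ⟨j,hj⟩).sink1 ∧ c < K) with h | h
          · rw [if_pos h] at hw
            simp only [List.mem_singleton] at hw
            subst hw
            exact ⟨Or.inl h.1, haccw⟩
          · rw [if_neg h] at hw; simp at hw
    · rintro ⟨hacc, hD⟩
      rcases hacc with rfl | ⟨w', hw', haccw'⟩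
      · refine Or.inr ⟨idx K (SB N Bs) (j+1) (c+1) 0, ?_, hD⟩
        exact List.mem_append.2 (Or.inr (by rw [if_pos ⟨rfl, hc⟩]; simp))
      · have hb := (Bs ⟨j,hj⟩).succ_lt _ _ _ hw'
        refine Or.inr ⟨idx K (SB N Bs) j c (1+w'), ?_,
          (ih w' (by omega) (by omega)).2 ⟨haccw', hD⟩⟩
        exact List.mem_append.2 (Or.inl (List.mem_map.2 ⟨w', hw', rfl⟩))

def Spec (α : ℕ → Bool) (j c : ℕ) : Prop :=
  ∃ T : Finset (Fin N), (∀ m ∈ T, j ≤ m.1 ∧ m.1 ≠ iv ∧ (Bs m).accepts α) ∧ T.card + c = K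

lemma spec_step (α : ℕ → Bool) {j : ℕ} (hj : j < N) (c : ℕ) :
    Spec N Bs iv K α j c ↔
      (Spec N Bs iv K α (j+1) c ∨
        (j ≠ iv ∧ c < K ∧ (Bs ⟨j,hj⟩).accepts α ∧ Spec N Bs iv K α (j+1) (c+1))) := by
  constructor
  · rintro ⟨T, hT, hcard⟩
    by_cases hmem : (⟨j,hj⟩ : Fin N) ∈ T
    · right
      obtain ⟨h1, h2, h3⟩ := hT _ hmem
      have hpos : 1 ≤ T.card := Finset.card_pos.2 ⟨_, hmem⟩
      refine ⟨h2, by omega, h3, ⟨T.erase ⟨j,hj⟩, ?_, ?_⟩⟩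
      · intro m hm
        obtain ⟨hm1, hm2⟩ := Finset.mem_erase.1 hm
        obtain ⟨g1, g2, g3⟩ := hT m hm2
        refine ⟨?_, g2, g3⟩
        rcases Nat.lt_or_ge j m.1 with h | h
        · omega
        · have hmj : m = ⟨j, hj⟩ := Fin.ext (show m.1 = j by omega)
          exact absurd hmj hm1
      · rw [Finset.card_erase_of_mem hmem]; omega
    · left
      refine ⟨T, ?_, hcard⟩
      intro m hm
      obtain ⟨g1, g2, g3⟩ := hT m hm
      refine ⟨?_, g2, g3⟩
      rcases Nat.lt_or_ge j m.1 with h | h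
      · omega
      · have hmj : m = ⟨j, hj⟩ := Fin.ext (show m.1 = j by omega)
        rw [hmj] at hm
        exact absurd hm hmem
  · rintro (⟨T, hT, hcard⟩ | ⟨h1, h2, h3, T, hT, hcard⟩)
    · exact ⟨T, fun m hm => ⟨by have := (hT m hm).1; omega, (hT m hm).2⟩, hcard⟩
    · have hnot : (⟨j,hj⟩ : Fin N) ∉ T := fun hmem => by
        have := (hT _ hmem).1; simp at this
      refine ⟨insert ⟨j,hj⟩ T, ?_, ?_⟩
      · intro m hm
        rcases Finset.mem_insert.1 hm with rfl | hm
        · exact ⟨le_refl _, h1, h3⟩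
        · have := hT m hm; exact ⟨by have := this.1; omega, this.2⟩
      · rw [Finset.card_insert_of_notMem hnot]; omega

lemma acc_dec_N (α : ℕ → Bool) {c : ℕ} (hc : c ≤ K) :
    (q N Bs iv K).acc α (idx K (SB N Bs) N c 0) ↔ Spec N Bs iv K α N c := by
  rw [acc_iff]
  have hsucc : ∀ b, (q N Bs iv K).succ (idx K (SB N Bs) N c 0) b = [] := by
    intro b
    rw [q_succ_idx N Bs iv K N c 0 hc (Nat.zero_le _)]
    unfold qsuccAux
    rw [dif_neg (lt_irrefl N)]
  rw [q_sink, hsucc]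
  constructor
  · rintro (h | ⟨w, hw, _⟩)
    · have := idx_inj hc (Nat.zero_le _) (le_refl K) (Nat.zero_le _) h
      exact ⟨∅, by simp, by simp; omega⟩
    · simp at hw
  · rintro ⟨T, hT, hcard⟩
    have hTe : T = ∅ := Finset.eq_empty_of_forall_notMem (fun m hm => by
      have := (hT m hm).1; have := m.2; omega)
    subst hTe
    simp at hcard
    exact Or.inl (by rw [hcard])

lemma acc_dec (α : ℕ → Bool) {j c : ℕ} (hj : j ≤ N) (hc : c ≤ K) :
    (q N Bs iv K).acc α (idx K (SB N Bs) j c 0) ↔ Spec N Bs iv K α j c := by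
  suffices H : ∀ n j c, N - j ≤ n → j ≤ N → c ≤ K →
      ((q N Bs iv K).acc α (idx K (SB N Bs) j c 0) ↔ Spec N Bs iv K α j c) from
    H (N - j) j c (le_refl _) hj hc
  intro n
  induction n with
  | zero =>
    intro j c h1 h2 h3
    rw [show j = N from by omega]
    exact acc_dec_N N Bs iv K α h3
  | succ n ih =>
    intro j c h1 h2 h3
    rcases Nat.eq_or_lt_of_le h2 with heq | hjN
    · rw [heq]; exact acc_dec_N N Bs iv K α h3
    · have hne : idx K (SB N Bs) j c 0 ≠ (q N Bs iv K).sink1 := by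
        rw [q_sink]
        intro h
        have := idx_inj h3 (Nat.zero_le _) (le_refl K) (Nat.zero_le _) h
        omega
      rw [acc_iff, q_sink,
        q_succ_idx N Bs iv K j c 0 h3 (Nat.zero_le _), qsuccAux_dec N Bs iv K hjN,
        spec_step N Bs iv K α hjN]
      have hskip := ih (j+1) c (by omega) (by omega) h3
      constructor
      · rintro (h | ⟨w, hw, haccw⟩)
        · exact absurd h hne
        · rcases List.mem_cons.1 hw with rfl | hw
          · exact Or.inl (hskip.1 haccw)
          · rcases Decidable.em (j ≠ iv ∧ c < K) with h | h
            · rw [if_pos h] at hw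
              simp only [List.mem_singleton] at hw
              subst hw
              have hcopy := (acc_copy N Bs iv K α c 0 hjN h.2 (lt_of_le_of_lt (Nat.zero_le _) (Bs ⟨j,hjN⟩).sink1_lt)).1
                (by simpa using haccw)
              exact Or.inr ⟨h.1, h.2,
                hcopy.1, (ih (j+1) (c+1) (by omega) (by omega) (by omega)).1 hcopy.2⟩
            · rw [if_neg h] at hw; simp at hw
      · rintro (h | ⟨h1, h2, h3', h4⟩)
        · exact Or.inr ⟨idx K (SB N Bs) (j+1) c 0, List.mem_cons_self, hskip.2 h⟩
        · refine Or.inr ⟨idx K (SB N Bs) j c 1, ?_, ?_⟩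
          · rw [if_pos ⟨h1, h2⟩]; simp
          · have := (acc_copy N Bs iv K α c 0 hjN h2 (lt_of_le_of_lt (Nat.zero_le _) (Bs ⟨j,hjN⟩).sink1_lt)).2
              ⟨h3', (ih (j+1) (c+1) (by omega) (by omega) (by omega)).2 h4⟩
            simpa using this


def reject : NBP where
  size := 2
  label := fun _ => 0
  succ := fun _ _ => []
  sink1 := 1
  sink1_lt := by omega
  succ_lt := by intro v b w h; simp at h

lemma reject_not_accepts (α : ℕ → Bool) : ¬ reject.accepts α := by
  rw [NBP.accepts, acc_iff]
  simp [reject]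

end IS

/-- Non-uniform partial Immerman–Szelepcsényi: there is a fixed polynomial `p` such that,
for Boolean functions computed by NBPs `B_0, …, B_{N−1}` of total size `s`, and for each
`i < N` and `k`, there is an NBP of size at most `p (s + N)` which, on every assignment
making exactly `k` of `B_0, …, B_{N−1}` true, computes the negation `¬B_i`. -/
theorem nonuniform_immerman_szelepcsenyi :
    ∃ p : Polynomial ℕ, ∀ (N : ℕ) (Bs : Fin N → NBP) (i : Fin N) (k : ℤ),
      ∃ Q : NBP,
        Q.size ≤ p.eval ((∑ j, (Bs j).size) + N) ∧
        ∀ α : ℕ → Bool,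
          (({j : Fin N | (Bs j).accepts α}.ncard : ℤ) = k) →
          (Q.accepts α ↔ ¬ (Bs i).accepts α) := by
  classical
  refine ⟨(Polynomial.X + Polynomial.C 2)^3, ?_⟩
  intro N Bs i k
  have heval : ((Polynomial.X + Polynomial.C 2)^3 : Polynomial ℕ).eval ((∑ j, (Bs j).size) + N)
      = ((∑ j, (Bs j).size) + N + 2)^3 := by simp
  by_cases hk : 0 ≤ k ∧ k ≤ (N : ℤ)
  · set s := ∑ j, (Bs j).size with hs
    set K := k.toNat with hK
    have hKN : K ≤ N := by omega
    refine ⟨IS.q N Bs i.1 K, ?_, ?_⟩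
    · rw [heval]
      have hsz : (IS.q N Bs i.1 K).size = (N*(K+1)+K)*((1+s)+1)+1 := rfl
      rw [hsz]
      have h0 : N*(K+1)+K ≤ N*N+2*N := by nlinarith [Nat.mul_le_mul_left N hKN]
      have h1 : (N*(K+1)+K)*((1+s)+1) ≤ (N*N+2*N)*(s+2) := by
        have h : (1+s)+1 = s+2 := by ring
        rw [h]; exact Nat.mul_le_mul_right _ h0
      have h2 : (s+N+2)^3 = (N*N+2*N)*(s+2) +
          (s^3+N^3+8+3*s^2*N+6*s^2+2*N^2*s+4*N^2+12*s+8*N+10*s*N) := by ring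
      omega
    · intro α hα
      have hfin : {j : Fin N | (Bs j).accepts α}.Finite := Set.toFinite _
      rw [Set.ncard_eq_toFinset_card _ hfin] at hα
      have hKc : hfin.toFinset.card = K := by omega
      have h00 : (0:ℕ) = IS.idx K (IS.SB N Bs) 0 0 0 := by simp [IS.idx]
      rw [NBP.accepts, h00, IS.acc_dec N Bs i.1 K α (Nat.zero_le _) (Nat.zero_le _)]
      constructor
      · rintro ⟨T, hT, hcard⟩ hacc
        have hsub : T ⊆ hfin.toFinset := fun m hm => hfin.mem_toFinset.2 ((hT m hm).2.2)
        have hTF : T = hfin.toFinset := Finset.eq_of_subset_of_card_le hsub (by omega)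
        have hiF : i ∈ hfin.toFinset := hfin.mem_toFinset.2 hacc
        rw [← hTF] at hiF
        exact (hT i hiF).2.1 rfl
      · intro hacc
        refine ⟨hfin.toFinset, ?_, by omega⟩
        intro m hm
        have hm' := hfin.mem_toFinset.1 hm
        simp only [Set.mem_setOf_eq] at hm'
        refine ⟨Nat.zero_le _, ?_, hm'⟩
        intro h
        rw [Fin.ext h] at hm'
        exact hacc hm'
  · refine ⟨IS.reject, ?_, ?_⟩
    · rw [heval]
      have h1 : (IS.reject).size = 2 := rfl
      have h2 : 2^3 ≤ ((∑ j, (Bs j).size) + N + 2)^3 := Nat.pow_le_pow_left (by omega) 3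
      omega
    · intro α hα
      exfalso
      have h2 : {j : Fin N | (Bs j).accepts α}.ncard ≤ N := by
        have hle := Set.ncard_le_ncard
          (Set.subset_univ {j : Fin N | (Bs j).accepts α}) Set.finite_univ
        rwa [Set.ncard_univ, Nat.card_eq_fintype_card, Fintype.card_fin] at hle
      push_neg at hk
      omega
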